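/- For any distinct points x, y ∈ ℝ³, the Fefferman–de la Llave formula holds: 1/|x−y| = (1/π) ∫₀^∞ r^{−5} ∫_{ℝ³} B_{r,z}(x) B_{r,z}(y) dz dr, where B_{r,z} is the indicator function of the open ball of radius r centered at z. -/

import Mathlib

open MeasureTheory

noncomputable def ballInd (r : ℝ) (z x : EuclideanSpace ℝ (Fin 3)) : ℝ :=
  (Metric.ball z r).indicator (fun _ => (1:ℝ)) x

open Metric Set

lemma disc_vol (c : ℝ) :
    volume {u : Fin 2 → ℝ | (u 0)^2 + (u 1)^2 < c} = ENNReal.ofReal (Real.pi * c) := by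
  rcases le_or_gt c 0 with hc | hc
  · have : {u : Fin 2 → ℝ | (u 0)^2 + (u 1)^2 < c} = ∅ := by
      ext u; simp only [mem_setOf_eq, mem_empty_iff_false, iff_false, not_lt]
      nlinarith [sq_nonneg (u 0), sq_nonneg (u 1)]
    rw [this, measure_empty, Eq.comm, ENNReal.ofReal_eq_zero]
    nlinarith [Real.pi_pos]
  · have hmp : MeasurePreserving (MeasurableEquiv.toLp 2 (Fin 2 → ℝ)) volume volume :=
      (EuclideanSpace.volume_preserving_symm_measurableEquiv_toLp (Fin 2)).symm
    have hpre : (MeasurableEquiv.toLp 2 (Fin 2 → ℝ)) ⁻¹'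
        (Metric.ball (0 : EuclideanSpace ℝ (Fin 2)) (Real.sqrt c)) =
        {u : Fin 2 → ℝ | (u 0)^2 + (u 1)^2 < c} := by
      ext u
      have : ((MeasurableEquiv.toLp 2 (Fin 2 → ℝ)) u : EuclideanSpace ℝ (Fin 2)) =
          (WithLp.equiv 2 (Fin 2 → ℝ)).symm u := rfl
      simp only [mem_preimage, mem_ball, this, dist_zero_right, EuclideanSpace.norm_eq,
        mem_setOf_eq, PiLp.toLp_apply, Fin.sum_univ_two, sq_abs]
      rw [Real.sqrt_lt_sqrt_iff (by positivity)]
      simp [Real.norm_eq_abs, sq_abs, Real.sq_sqrt hc.le]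
    rw [← hpre, hmp.measure_preimage measurableSet_ball.nullMeasurableSet,
      EuclideanSpace.volume_ball]
    have h2 : Fintype.card (Fin 2) = 2 := by simp
    rw [h2]
    rw [show ((2:ℕ):ℝ)/2 + 1 = 2 by norm_num, Real.Gamma_two]
    rw [← ENNReal.ofReal_pow (Real.sqrt_nonneg c), Real.sq_sqrt hc.le,
      ← ENNReal.ofReal_mul hc.le]
    rw [Real.sq_sqrt Real.pi_pos.le]
    rw [mul_comm]
    norm_num

lemma slice_lintegral (d r : ℝ) (hd : 0 < d) (hr : d/2 ≤ r) :
    (∫⁻ t : ℝ, ENNReal.ofReal (Real.pi * (r^2 - max (t^2) ((t-d)^2))))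
      = ENNReal.ofReal (Real.pi/12 * (16*r^3 - 12*r^2*d + d^3)) := by
  have hr0 : 0 < r := lt_of_lt_of_le (by linarith) hr
  set g : ℝ → ℝ := fun t => Real.pi * max 0 (r^2 - max (t^2) ((t-d)^2)) with hg
  have hgeq : ∀ t : ℝ, ENNReal.ofReal (Real.pi * (r^2 - max (t^2) ((t-d)^2)))
      = ENNReal.ofReal (g t) := by
    intro t
    rcases le_total (r^2 - max (t^2) ((t-d)^2)) 0 with h | h
    · have h1 : g t = 0 := by
        simp only [hg]; rw [max_eq_left h, mul_zero]
      rw [h1, ENNReal.ofReal_zero,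
        ENNReal.ofReal_eq_zero.mpr (mul_nonpos_iff.mpr (Or.inl ⟨Real.pi_pos.le, h⟩))]
    · have h1 : g t = Real.pi * (r^2 - max (t^2) ((t-d)^2)) := by
        simp only [hg]; rw [max_eq_right h]
      rw [h1]
  simp_rw [hgeq]
  have hcont : Continuous g := by
    apply continuous_const.mul
    exact continuous_const.max (continuous_const.sub
      ((continuous_id.pow 2).max ((continuous_id.sub continuous_const).pow 2)))
  have hsupp : HasCompactSupport g := by
    apply HasCompactSupport.intro (isCompact_Icc (a := -r) (b := r))
    intro t ht
    simp only [mem_Icc, not_and_or, not_le] at ht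
    have h2 : r^2 - max (t^2) ((t-d)^2) ≤ 0 := by
      rcases ht with h | h
      · nlinarith [le_max_left (t^2) ((t-d)^2)]
      · nlinarith [le_max_left (t^2) ((t-d)^2)]
    rw [hg]; simp only [max_eq_left h2, mul_zero]
  have hInt : Integrable g := hcont.integrable_of_hasCompactSupport hsupp
  have hpos : 0 ≤ g := fun t => by positivity
  rw [← MeasureTheory.ofReal_integral_eq_lintegral_ofReal hInt (ae_of_all _ hpos)]
  congr 1
  -- restrict to Ioc (d-r) r
  have hzero : ∀ t ∉ Ioc (d-r) r, g t = 0 := by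
    intro t ht
    simp only [mem_Ioc, not_and_or, not_lt, not_le] at ht
    have h2 : r^2 - max (t^2) ((t-d)^2) ≤ 0 := by
      rcases ht with h | h
      · nlinarith [le_max_right (t^2) ((t-d)^2)]
      · nlinarith [le_max_left (t^2) ((t-d)^2)]
    rw [hg]; simp only [max_eq_left h2, mul_zero]
  rw [← MeasureTheory.setIntegral_eq_integral_of_forall_compl_eq_zero hzero,
    ← intervalIntegral.integral_of_le (by linarith : d - r ≤ r)]
  have hsplit := intervalIntegral.integral_add_adjacent_intervals
    (a := d - r) (b := d/2) (c := r) (f := g) (μ := volume)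
    (hcont.intervalIntegrable _ _) (hcont.intervalIntegrable _ _)
  rw [← hsplit]
  -- first piece
  have e1 : (∫ t in (d-r)..(d/2), g t) = ∫ t in (d-r)..(d/2), Real.pi * (r^2 - (t-d)^2) := by
    apply intervalIntegral.integral_congr
    intro t ht
    rw [uIcc_of_le (by linarith)] at ht
    obtain ⟨h1, h2⟩ := ht
    rw [hg]
    simp only
    rw [max_eq_right (by nlinarith : t^2 ≤ (t-d)^2), max_eq_right (by nlinarith)]
  have e2 : (∫ t in (d/2)..r, g t) = ∫ t in (d/2)..r, Real.pi * (r^2 - t^2) := by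
    apply intervalIntegral.integral_congr
    intro t ht
    rw [uIcc_of_le (by linarith)] at ht
    obtain ⟨h1, h2⟩ := ht
    rw [hg]
    simp only
    rw [max_eq_left (by nlinarith : (t-d)^2 ≤ t^2), max_eq_right (by nlinarith)]
  have d1 : ∀ t : ℝ, HasDerivAt (fun t => Real.pi*(r^2*t - (t-d)^3/3))
      (Real.pi * (r^2 - (t-d)^2)) t := by
    intro t
    have h1 : HasDerivAt (fun t : ℝ => t - d) 1 t := (hasDerivAt_id t).sub_const d
    have h2 := h1.fun_pow 3
    have h3 : HasDerivAt (fun t : ℝ => r^2*t) (r^2) t := by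
      simpa using (hasDerivAt_id t).const_mul (r^2)
    refine ((h3.sub (h2.div_const 3)).const_mul Real.pi).congr_deriv ?_
    ring
  have d2 : ∀ t : ℝ, HasDerivAt (fun t => Real.pi*(r^2*t - t^3/3))
      (Real.pi * (r^2 - t^2)) t := by
    intro t
    have h2 := (hasDerivAt_id t).fun_pow 3
    simp only [id_eq] at h2
    have h3 : HasDerivAt (fun t : ℝ => r^2*t) (r^2) t := by
      simpa using (hasDerivAt_id t).const_mul (r^2)
    refine ((h3.sub (h2.div_const 3)).const_mul Real.pi).congr_deriv ?_
    ring
  have i1 := intervalIntegral.integral_eq_sub_of_hasDerivAt (a := d - r) (b := d/2)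
    (fun t _ => d1 t) ((by fun_prop : Continuous fun t : ℝ => Real.pi * (r^2 - (t-d)^2)).intervalIntegrable _ _)
  have i2 := intervalIntegral.integral_eq_sub_of_hasDerivAt (a := d/2) (b := r)
    (fun t _ => d2 t) ((by fun_prop : Continuous fun t : ℝ => Real.pi * (r^2 - t^2)).intervalIntegrable _ _)
  rw [e1, e2, i1, i2]
  ring

lemma canon_vol (d r : ℝ) (hd : 0 < d) (hr : d/2 ≤ r) :
    volume (ball (0 : EuclideanSpace ℝ (Fin 3)) r ∩
        ball ((d : ℝ) • (EuclideanSpace.single (0 : Fin 3) (1:ℝ))) r)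
      = ENNReal.ofReal (Real.pi/12 * (16*r^3 - 12*r^2*d + d^3)) := by
  have hr0 : 0 < r := lt_of_lt_of_le (by linarith) hr
  -- Step 1: to Pi space
  set T : Set (Fin 3 → ℝ) :=
    {v | v 0^2 + v 1^2 + v 2^2 < r^2 ∧ (v 0 - d)^2 + v 1^2 + v 2^2 < r^2} with hT
  have h1 : volume (ball (0 : EuclideanSpace ℝ (Fin 3)) r ∩
      ball ((d : ℝ) • (EuclideanSpace.single (0 : Fin 3) (1:ℝ))) r) = volume T := by
    have hmp := (EuclideanSpace.volume_preserving_symm_measurableEquiv_toLp (Fin 3)).symm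
    have hpre : (MeasurableEquiv.toLp 2 (Fin 3 → ℝ)) ⁻¹'
        (ball (0 : EuclideanSpace ℝ (Fin 3)) r ∩
          ball ((d : ℝ) • (EuclideanSpace.single (0 : Fin 3) (1:ℝ))) r) = T := by
      ext v
      have he : ((MeasurableEquiv.toLp 2 (Fin 3 → ℝ)) v : EuclideanSpace ℝ (Fin 3)) =
          (WithLp.equiv 2 (Fin 3 → ℝ)).symm v := rfl
      simp only [mem_preimage, mem_inter_iff, mem_ball, he, hT, mem_setOf_eq]
      rw [dist_zero_right, dist_eq_norm, EuclideanSpace.norm_eq, EuclideanSpace.norm_eq]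
      rw [Real.sqrt_lt' hr0, Real.sqrt_lt' hr0]
      simp only [Fin.sum_univ_three, PiLp.toLp_apply, PiLp.sub_apply,
        PiLp.smul_apply, EuclideanSpace.single_apply, smul_eq_mul, Real.norm_eq_abs, sq_abs]
      norm_num [show ((2:Fin 3)) ≠ 0 from by decide, show ((1:Fin 3)) ≠ 0 from by decide]
    rw [← hpre]
    exact Eq.symm <| hmp.measure_preimage ((measurableSet_ball.inter measurableSet_ball).nullMeasurableSet)
  rw [h1]
  -- Step 2: to product space
  have hmp2 := MeasureTheory.volume_preserving_piFinSuccAbove (fun _ : Fin 3 => ℝ) 0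
  set A : Set (ℝ × (Fin 2 → ℝ)) :=
    {p | p.1^2 + (p.2 0)^2 + (p.2 1)^2 < r^2 ∧ (p.1 - d)^2 + (p.2 0)^2 + (p.2 1)^2 < r^2}
      with hA
  have hc1 : Continuous fun p : ℝ × (Fin 2 → ℝ) => p.1^2 + (p.2 0)^2 + (p.2 1)^2 := by
    fun_prop
  have hc2 : Continuous fun p : ℝ × (Fin 2 → ℝ) => (p.1 - d)^2 + (p.2 0)^2 + (p.2 1)^2 := by
    fun_prop
  have hAopen : IsOpen A :=
    (isOpen_lt hc1 continuous_const).inter (isOpen_lt hc2 continuous_const)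
  have hpre2 : (MeasurableEquiv.piFinSuccAbove (fun _ : Fin 3 => ℝ) 0) ⁻¹' A = T := by
    ext v
    have he : (MeasurableEquiv.piFinSuccAbove (fun _ : Fin 3 => ℝ) 0) v =
        (v 0, fun j : Fin 2 => v ((0 : Fin 3).succAbove j)) := rfl
    simp only [mem_preimage, he, hA, hT, mem_setOf_eq]
    norm_num [Fin.succAbove]
  have h2 : volume T = volume A := by
    rw [← hpre2]
    exact hmp2.measure_preimage hAopen.measurableSet.nullMeasurableSet
  rw [h2, Measure.volume_eq_prod, Measure.prod_apply hAopen.measurableSet]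
  -- Step 3: slices
  have hslice : ∀ t : ℝ, volume (Prod.mk t ⁻¹' A) =
      ENNReal.ofReal (Real.pi * (r^2 - max (t^2) ((t-d)^2))) := by
    intro t
    have : Prod.mk t ⁻¹' A = {u : Fin 2 → ℝ | (u 0)^2 + (u 1)^2 < r^2 - max (t^2) ((t-d)^2)} := by
      ext u
      simp only [mem_preimage, hA, mem_setOf_eq]
      rw [lt_sub_comm, max_lt_iff]
      constructor <;> rintro ⟨h1, h2⟩ <;> constructor <;> linarith
    rw [this, disc_vol]
  simp_rw [hslice]
  rw [slice_lintegral d r hd hr]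

lemma inter_empty (x y : EuclideanSpace ℝ (Fin 3)) (r : ℝ) (h : 2*r ≤ dist x y) :
    ball x r ∩ ball y r = ∅ := by
  ext z
  simp only [mem_inter_iff, mem_ball, mem_empty_iff_false, iff_false, not_and, not_lt]
  intro h1
  have t1 := dist_triangle x z y
  have t2 : dist z x = dist x z := dist_comm z x
  have t3 : dist z y = dist y z := dist_comm z y
  linarith

lemma vol_inter_eq (x y : EuclideanSpace ℝ (Fin 3)) (hxy : x ≠ y) (r : ℝ)
    (hr : dist x y / 2 ≤ r) :
    volume (ball x r ∩ ball y r) =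
      ENNReal.ofReal (Real.pi/12 * (16*r^3 - 12*r^2*(dist x y) + (dist x y)^3)) := by
  set d := dist x y with hdd
  have hd : 0 < d := dist_pos.mpr hxy
  -- translation to 0
  have htrans : volume (ball x r ∩ ball y r) =
      volume (ball (0 : EuclideanSpace ℝ (Fin 3)) r ∩ ball (y - x) r) := by
    have hmp : MeasurePreserving (fun z : EuclideanSpace ℝ (Fin 3) => z + x)
        volume volume := measurePreserving_add_right volume x
    have hpre : (fun z : EuclideanSpace ℝ (Fin 3) => z + x) ⁻¹' (ball x r ∩ ball y r) =
        ball (0 : EuclideanSpace ℝ (Fin 3)) r ∩ ball (y - x) r := by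
      ext z
      simp only [mem_preimage, mem_inter_iff, mem_ball, dist_eq_norm]
      rw [show z + x - x = z - 0 by abel, show z + x - y = z - (y - x) by abel]
    rw [← hpre]
    exact (hmp.measure_preimage
      ((measurableSet_ball.inter measurableSet_ball).nullMeasurableSet)).symm
  -- rotation
  have hnorm : ‖y - x‖ = d := by rw [hdd, dist_comm, dist_eq_norm]
  set v : Fin 3 → EuclideanSpace ℝ (Fin 3) := fun _ => (d⁻¹ : ℝ) • (y - x) with hv
  have hvo : Orthonormal ℝ (Set.restrict {0} v) := by
    constructor
    · rintro ⟨i, hi⟩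
      show ‖(d⁻¹ : ℝ) • (y - x)‖ = 1
      simp only [Set.restrict_apply, hv, norm_smul, Real.norm_eq_abs,
        abs_of_pos (inv_pos.mpr hd), hnorm]
      field_simp
    · rintro ⟨i, hi⟩ ⟨j, hj⟩ hij
      simp only [mem_singleton_iff] at hi hj
      subst hi; subst hj
      exact absurd rfl hij
  have hcard : Module.finrank ℝ (EuclideanSpace ℝ (Fin 3)) = Fintype.card (Fin 3) := by
    simp [finrank_euclideanSpace]
  obtain ⟨b, hb⟩ := hvo.exists_orthonormalBasis_extension_of_card_eq hcard
  have hb0 : b 0 = (d⁻¹ : ℝ) • (y - x) := hb 0 rfl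
  have hyx : y - x = d • b 0 := by
    rw [hb0, smul_smul, mul_inv_cancel₀ hd.ne', one_smul]
  have hrot : volume (ball (0 : EuclideanSpace ℝ (Fin 3)) r ∩ ball (y - x) r) =
      volume (ball (0 : EuclideanSpace ℝ (Fin 3)) r ∩
        ball ((d : ℝ) • (EuclideanSpace.single (0 : Fin 3) (1:ℝ))) r) := by
    have hmp := b.measurePreserving_repr_symm
    have hpre : (b.repr.symm : EuclideanSpace ℝ (Fin 3) → EuclideanSpace ℝ (Fin 3)) ⁻¹'
        (ball (0 : EuclideanSpace ℝ (Fin 3)) r ∩ ball (y - x) r) =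
        ball (0 : EuclideanSpace ℝ (Fin 3)) r ∩
          ball ((d : ℝ) • (EuclideanSpace.single (0 : Fin 3) (1:ℝ))) r := by
      rw [Set.preimage_inter, LinearIsometryEquiv.preimage_ball,
        LinearIsometryEquiv.preimage_ball, LinearIsometryEquiv.symm_symm, map_zero, hyx,
        b.repr.map_smul, OrthonormalBasis.repr_self]
    rw [← hpre]
    exact (hmp.measure_preimage
      ((measurableSet_ball.inter measurableSet_ball).nullMeasurableSet)).symm
  rw [htrans, hrot, canon_vol d r hd hr]

lemma inner_int (r : ℝ) (x y : EuclideanSpace ℝ (Fin 3)) :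
    (∫ z : EuclideanSpace ℝ (Fin 3), ballInd r z x * ballInd r z y)
      = (volume (ball x r ∩ ball y r)).toReal := by
  have heq : ∀ z : EuclideanSpace ℝ (Fin 3), ballInd r z x * ballInd r z y
      = (ball x r ∩ ball y r).indicator (fun _ => (1:ℝ)) z := by
    intro z
    have hx : x ∈ ball z r ↔ z ∈ ball x r := mem_ball_comm
    have hy : y ∈ ball z r ↔ z ∈ ball y r := mem_ball_comm
    by_cases h1 : z ∈ ball x r <;> by_cases h2 : z ∈ ball y r <;>
      simp [ballInd, Set.indicator_apply, hx, hy, h1, h2]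
  simp_rw [heq]
  rw [show (fun _ : EuclideanSpace ℝ (Fin 3) => (1:ℝ)) = (1 : EuclideanSpace ℝ (Fin 3) → ℝ)
    from rfl]
  exact integral_indicator_one (measurableSet_ball.inter measurableSet_ball)

theorem fefferman_de_la_llave (x y : EuclideanSpace ℝ (Fin 3)) (hxy : x ≠ y) :
    1 / dist x y =
      (1 / Real.pi) * ∫ r in Set.Ioi (0:ℝ),
        r ^ (-5 : ℤ) * ∫ z : EuclideanSpace ℝ (Fin 3), ballInd r z x * ballInd r z y := by
  set d := dist x y with hdd
  have hd : 0 < d := dist_pos.mpr hxy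
  set f : ℝ → ℝ := fun r => r ^ (-5 : ℤ) * (volume (ball x r ∩ ball y r)).toReal with hf
  have hstep1 : (∫ r in Set.Ioi (0:ℝ),
      r ^ (-5 : ℤ) * ∫ z : EuclideanSpace ℝ (Fin 3), ballInd r z x * ballInd r z y)
      = ∫ r in Set.Ioi (0:ℝ), f r := by
    simp_rw [inner_int]
    rfl
  rw [hstep1]
  -- split the domain
  have hsplit : Set.Ioi (0:ℝ) = Set.Ioc 0 (d/2) ∪ Set.Ioi (d/2) :=
    (Set.Ioc_union_Ioi_eq_Ioi (by linarith)).symm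
  -- f vanishes on Ioc 0 (d/2)
  have hzero : ∀ r ∈ Set.Ioc (0:ℝ) (d/2), f r = 0 := by
    intro r hr
    have : ball x r ∩ ball y r = ∅ := inter_empty x y r (by rw [← hdd]; linarith [hr.2])
    simp [hf, this]
  -- explicit formula on Ioi (d/2)
  set φ : ℝ → ℝ := fun r => r ^ (-5 : ℤ) * (Real.pi/12 * (16*r^3 - 12*r^2*d + d^3)) with hφ
  have hfφ : ∀ r ∈ Set.Ioi (d/2), f r = φ r := by
    intro r hr
    rw [hf, hφ]
    simp only
    rw [vol_inter_eq x y hxy r (le_of_lt hr), ← hdd, ENNReal.toReal_ofReal]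
    have hr2 : d/2 < r := hr
    have hkey : 0 ≤ 16*r^3 - 12*r^2*d + d^3 := by nlinarith [sq_nonneg (2*r-d)]
    positivity
  -- the antiderivative
  set G : ℝ → ℝ := fun r => Real.pi/12 * (-16*r⁻¹ + 6*d*(r⁻¹)^2 - d^3/4*(r⁻¹)^4) with hG
  have hderiv : ∀ r ∈ Set.Ioi (d/2), HasDerivAt G (φ r) r := by
    intro r hr
    have hr0 : 0 < r := lt_trans (by linarith) hr
    have h1 : HasDerivAt (fun r : ℝ => r⁻¹) (-(r^2)⁻¹) r := by
      simpa using hasDerivAt_inv hr0.ne'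
    have h2 := h1.fun_pow 2
    have h4 := h1.fun_pow 4
    have := (((h1.const_mul (-16:ℝ)).add (h2.const_mul (6*d))).sub
      (h4.const_mul (d^3/4))).const_mul (Real.pi/12)
    refine this.congr_deriv ?_
    rw [hφ]
    simp only
    have hz : (r:ℝ) ^ (-5:ℤ) = (r^(5:ℕ))⁻¹ := by
      rw [zpow_neg, show (5:ℤ) = ((5:ℕ):ℤ) from rfl, zpow_natCast]
    rw [hz]
    norm_num
    field_simp
    ring
  have hnonneg : ∀ r ∈ Set.Ioi (d/2), 0 ≤ φ r := by
    intro r hr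
    have hr0 : 0 < r := lt_trans (by linarith) hr
    have hr2 : d/2 < r := hr
    rw [hφ]
    simp only
    have hz : (r:ℝ) ^ (-5:ℤ) = (r^(5:ℕ))⁻¹ := by
      rw [zpow_neg, show (5:ℤ) = ((5:ℕ):ℤ) from rfl, zpow_natCast]
    rw [hz]
    have hkey : 0 ≤ 16*r^3 - 12*r^2*d + d^3 := by nlinarith [sq_nonneg (2*r-d)]
    positivity
  have htend : Filter.Tendsto G Filter.atTop (nhds 0) := by
    have hinv := tendsto_inv_atTop_zero (𝕜 := ℝ)
    have hcont : Continuous fun u : ℝ => Real.pi/12 * (-16*u + 6*d*u^2 - d^3/4*u^4) := by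
      fun_prop
    have heq : G = (fun u : ℝ => Real.pi/12 * (-16*u + 6*d*u^2 - d^3/4*u^4)) ∘
        (fun r : ℝ => r⁻¹) := by
      funext r
      simp [hG, Function.comp]
    rw [heq]
    refine Filter.Tendsto.comp ?_ hinv
    have h0 : Real.pi/12 * (-16*(0:ℝ) + 6*d*0^2 - d^3/4*0^4) = 0 := by norm_num
    have := hcont.tendsto 0
    rw [h0] at this
    exact this
  have hcontG : ContinuousWithinAt G (Set.Ici (d/2)) (d/2) := by
    have h0 : (d/2) ≠ 0 := by positivity
    have hinv : ContinuousAt (fun r : ℝ => r⁻¹) (d/2) := continuousAt_inv₀ h0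
    have hc : ContinuousAt G (d/2) :=
      (((hinv.const_mul (-16:ℝ)).add ((hinv.pow 2).const_mul (6*d))).sub
        ((hinv.pow 4).const_mul (d^3/4))).const_mul (Real.pi/12)
    exact hc.continuousWithinAt
  have hval := integral_Ioi_of_hasDerivAt_of_nonneg hcontG hderiv hnonneg htend
  have hint := integrableOn_Ioi_deriv_of_nonneg hcontG hderiv hnonneg htend
  -- compute G (d/2)
  have hGd : G (d/2) = -Real.pi / d := by
    rw [hG]
    simp only
    field_simp
    ring
  -- assemble
  rw [hsplit, setIntegral_union (Set.Ioc_disjoint_Ioi le_rfl) measurableSet_Ioi]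
  · rw [setIntegral_congr_fun measurableSet_Ioc hzero,
      setIntegral_congr_fun measurableSet_Ioi hfφ, integral_zero, zero_add, hval, hGd]
    field_simp
    ring
  · exact (integrableOn_zero (μ := volume)).congr_fun (fun r hr => (hzero r hr).symm)
      measurableSet_Ioc
  · exact (hint.congr_fun (fun r hr => (hfφ r hr).symm) measurableSet_Ioi)
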